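/- If a Banach space X is minimal, then X is locally minimal: there is a constant K such that X is K-crudely finitely representable in every infinite-dimensional subspace of X. -/

import Mathlib

open scoped BigOperators Classical

noncomputable section

section Prelude

variable {X : Type*} [NormedAddCommGroup X] [NormedSpace ℝ X]

/-- The vector with finitely supported coefficients `c` with respect to the sequence `e`. -/
def vecOf (e : ℕ → X) (c : ℕ →₀ ℝ) : X := c.sum fun n a => a • e n

/-- `c < d` : the supports of `c` and `d` are successive. -/
def FsuppLt (c d : ℕ →₀ ℝ) : Prop := ∀ a ∈ c.support, ∀ b ∈ d.support, a < b

/-- The Gowers–Maurey function `f(n) = log₂(n+1)`. -/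
def flog (n : ℕ) : ℝ := Real.logb 2 ((n : ℝ) + 1)

/-- Support of a functional with respect to the basis `e` (via biorthogonal functionals). -/
def fsupp (e : ℕ → X) (f : X →L[ℝ] ℝ) : Set ℕ := {n | f (e n) ≠ 0}

/-- Bimonotonicity of the basis `e`, expressed on finitely supported vectors:
projections onto intervals are contractive. -/
def Bimonotone (e : ℕ → X) : Prop :=
  ∀ (c : ℕ →₀ ℝ) (a b : ℕ), ‖vecOf e (c.filter fun n => n ∈ Finset.Icc a b)‖ ≤ ‖vecOf e c‖

/-- Lower `f`-estimate for a general function `f`. -/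
def LowerEst (e : ℕ → X) (f : ℝ → ℝ) : Prop :=
  ∀ (n : ℕ) (c : Fin n → ℕ →₀ ℝ), (∀ i j : Fin n, i < j → FsuppLt (c i) (c j)) →
    (1 / f (n : ℝ)) * ∑ i, ‖vecOf e (c i)‖ ≤ ‖∑ i, vecOf e (c i)‖

/-- Lower `f`-estimate with `f(n) = log₂(n+1)`. -/
def LowerFEst (e : ℕ → X) : Prop :=
  ∀ (n : ℕ) (c : Fin n → ℕ →₀ ℝ), (∀ i j : Fin n, i < j → FsuppLt (c i) (c j)) →
    (1 / flog n) * ∑ i, ‖vecOf e (c i)‖ ≤ ‖∑ i, vecOf e (c i)‖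

/-- `Y` embeds isomorphically into `Z` (linear isomorphism onto its image). -/
def Embeds (Y Z : Type*) [NormedAddCommGroup Y] [NormedSpace ℝ Y]
    [NormedAddCommGroup Z] [NormedSpace ℝ Z] : Prop :=
  ∃ T : Y →L[ℝ] Z, ∃ c : ℝ, 0 < c ∧ ∀ y, c * ‖y‖ ≤ ‖T y‖

/-- `Y` embeds into `Z` with constant `K` (i.e. `‖T‖ ⬝ ‖T⁻¹‖ ≤ K` after normalisation). -/
def EmbedsWithConst (K : ℝ) (Y Z : Type*) [NormedAddCommGroup Y] [NormedSpace ℝ Y]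
    [NormedAddCommGroup Z] [NormedSpace ℝ Z] : Prop :=
  ∃ T : Y →L[ℝ] Z, ∀ y, ‖y‖ ≤ ‖T y‖ ∧ ‖T y‖ ≤ K * ‖y‖

/-- The closed span `[eₙ : n ∉ S]`. -/
def spanCompl (e : ℕ → X) (S : Set ℕ) : Submodule ℝ X :=
  (Submodule.span ℝ (e '' Sᶜ)).topologicalClosure

/-- `Y` is tight in the basic sequence `e`. -/
def TightIn (e : ℕ → X) (Y : Type*) [NormedAddCommGroup Y] [NormedSpace ℝ Y] : Prop :=
  ∃ I : ℕ → Finset ℕ, (∀ i j : ℕ, i < j → ∀ a ∈ I i, ∀ b ∈ I j, a < b) ∧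
    ∀ A : Set ℕ, A.Infinite → ¬ Embeds Y ↥(spanCompl e (⋃ i ∈ A, (I i : Set ℕ)))

/-- The basis `e` is tight: every infinite-dimensional Banach space is tight in it. -/
def TightBasis (e : ℕ → X) : Prop :=
  ∀ (Y : Type) [NormedAddCommGroup Y] [NormedSpace ℝ Y] [CompleteSpace Y],
    ¬ FiniteDimensional ℝ Y → TightIn e Y

end Prelude

section Aux2
section Aux
variable {X : Type} [NormedAddCommGroup X] [NormedSpace ℝ X] [CompleteSpace X]

/-- `X` embeds into the subspace `W` with lower constant `1` and upper constant `K`. -/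
def GoodK (K : ℝ) (W : Submodule ℝ X) : Prop :=
  ∃ T : X →L[ℝ] X, (∀ x, T x ∈ W) ∧ ∀ x, ‖x‖ ≤ ‖T x‖ ∧ ‖T x‖ ≤ K * ‖x‖

lemma GoodK.mono {K : ℝ} {W W' : Submodule ℝ X} (h : GoodK K W) (hWW : W ≤ W') : GoodK K W' := by
  obtain ⟨T, hT, hb⟩ := h
  exact ⟨T, fun x => hWW (hT x), hb⟩

lemma GoodK.monoK {K K' : ℝ} {W : Submodule ℝ X} (h : GoodK K W) (hKK : K ≤ K') : GoodK K' W := by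
  obtain ⟨T, hT, hb⟩ := h
  refine ⟨T, hT, fun x => ⟨(hb x).1, le_trans (hb x).2 ?_⟩⟩
  exact mul_le_mul_of_nonneg_right hKK (norm_nonneg x)

lemma goodK_top : GoodK (X := X) 1 ⊤ :=
  ⟨ContinuousLinearMap.id ℝ X, fun x => trivial, fun x => by simp⟩

/-- From `hmin` style data : a normalized ambient embedding into `Z`. -/
lemma exists_goodK_of_embeds {Z : Submodule ℝ X} (h : Embeds X ↥Z) :
    ∃ C : ℝ, 1 ≤ C ∧ GoodK C Z := by
  obtain ⟨T, c, hc, hT⟩ := h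
  set S : X →L[ℝ] X := c⁻¹ • (Z.subtypeL.comp T) with hS
  have hmem : ∀ x, S x ∈ Z := fun x => by
    simp only [hS, ContinuousLinearMap.smul_apply, ContinuousLinearMap.coe_comp',
      Function.comp_apply, Submodule.coe_subtypeL', Submodule.coe_subtype]
    exact Z.smul_mem _ (T x).2
  have hnorm : ∀ x, ‖S x‖ = c⁻¹ * ‖Z.subtypeL.comp T x‖ := by
    intro x
    rw [hS]
    simp only [ContinuousLinearMap.smul_apply, norm_smul, Real.norm_eq_abs,
      abs_of_pos (inv_pos.mpr hc)]
  have hTx : ∀ x : X, ‖Z.subtypeL.comp T x‖ = ‖T x‖ := fun x => rfl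
  have hlow : ∀ x, ‖x‖ ≤ ‖S x‖ := by
    intro x
    rw [hnorm, hTx, le_inv_mul_iff₀ hc]
    exact hT x
  refine ⟨max 1 (c⁻¹ * ‖Z.subtypeL.comp T‖), le_max_left _ _, S, hmem, fun x => ⟨hlow x, ?_⟩⟩
  rw [hnorm]
  calc c⁻¹ * ‖Z.subtypeL.comp T x‖ ≤ c⁻¹ * (‖Z.subtypeL.comp T‖ * ‖x‖) := by
        apply mul_le_mul_of_nonneg_left ((Z.subtypeL.comp T).le_opNorm x) (inv_pos.mpr hc).le
    _ = c⁻¹ * ‖Z.subtypeL.comp T‖ * ‖x‖ := (mul_assoc _ _ _).symm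
    _ ≤ max 1 (c⁻¹ * ‖Z.subtypeL.comp T‖) * ‖x‖ :=
        mul_le_mul_of_nonneg_right (le_max_right _ _) (norm_nonneg x)

/-- The image of a closed submodule under an expanding operator is closed. -/
lemma isClosed_map_of_expand {S : X →L[ℝ] X} (hS : ∀ x, ‖x‖ ≤ ‖S x‖)
    {Z : Submodule ℝ X} (hZ : IsClosed (Z : Set X)) :
    IsClosed ((Z.map (S : X →ₗ[ℝ] X)) : Set X) := by
  haveI : CompleteSpace Z := hZ.completeSpace_coe
  set f : ↥Z →L[ℝ] X := S.comp Z.subtypeL with hf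
  have hanti : AntilipschitzWith 1 f := by
    apply AddMonoidHomClass.antilipschitz_of_bound
    intro x
    simpa [hf] using hS (x : X)
  have : Set.range f = ((Z.map (S : X →ₗ[ℝ] X)) : Set X) := by
    ext y
    simp only [Set.mem_range, Submodule.map_coe, Set.mem_image, SetLike.mem_coe]
    constructor
    · rintro ⟨z, rfl⟩; exact ⟨z, z.2, rfl⟩
    · rintro ⟨z, hz, rfl⟩; exact ⟨⟨z, hz⟩, rfl⟩
  rw [← this]
  exact hanti.isClosed_range f.uniformContinuous

lemma expand_injective {S : X →L[ℝ] X} (hS : ∀ x, ‖x‖ ≤ ‖S x‖) :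
    Function.Injective S := by
  intro a b hab
  have : ‖a - b‖ ≤ ‖S (a - b)‖ := hS _
  rw [map_sub, hab, sub_self, norm_zero] at this
  have := le_antisymm this (norm_nonneg _)
  rwa [norm_eq_zero, sub_eq_zero] at this

lemma infdim_map_of_expand {S : X →L[ℝ] X} (hS : ∀ x, ‖x‖ ≤ ‖S x‖)
    {Z : Submodule ℝ X} (hZ : ¬ FiniteDimensional ℝ Z) :
    ¬ FiniteDimensional ℝ (Z.map (S : X →ₗ[ℝ] X)) := by
  intro hfd
  apply hZ
  exact FiniteDimensional.of_injective
    (Submodule.equivMapOfInjective (S : X →ₗ[ℝ] X) (expand_injective hS) Z).toLinearMap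
    (Submodule.equivMapOfInjective _ _ Z).injective

/-- Pushing badness forward: if the image `S(Z)` admits a `K`-good embedding then `Z` admits
a `c*K`-good one, where `c` is the upper constant of `S`. -/
lemma GoodK.pull {S : X →L[ℝ] X} {c : ℝ} (hS : ∀ x, ‖x‖ ≤ ‖S x‖ ∧ ‖S x‖ ≤ c * ‖x‖)
    {Z : Submodule ℝ X} {K : ℝ} (hK : 0 ≤ K)
    (h : GoodK K (Z.map (S : X →ₗ[ℝ] X))) : GoodK (c * K) Z := by
  obtain ⟨T, hTmem, hTb⟩ := h
  have hinj : Function.Injective (S : X →ₗ[ℝ] X) := expand_injective (fun x => (hS x).1)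
  set e := LinearEquiv.ofInjective (S : X →ₗ[ℝ] X) hinj with he
  have hrange : ∀ x, T x ∈ LinearMap.range (S : X →ₗ[ℝ] X) := by
    intro x
    obtain ⟨z, _, hz⟩ := hTmem x
    exact ⟨z, hz⟩
  set R₁ : X →ₗ[ℝ] X :=
    (e.symm : LinearMap.range (S : X →ₗ[ℝ] X) →ₗ[ℝ] X).comp
      (LinearMap.codRestrict (LinearMap.range (S : X →ₗ[ℝ] X)) (T : X →ₗ[ℝ] X) hrange)
    with hR₁
  have hSR : ∀ x, S (R₁ x) = T x := by
    intro x
    have h1 : ∀ y : LinearMap.range (S : X →ₗ[ℝ] X), S (e.symm y) = (y : X) := by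
      intro y
      have := e.apply_symm_apply y
      have h2 : ((e (e.symm y)) : X) = S (e.symm y) := rfl
      rw [this] at h2
      exact h2.symm
    exact h1 _
  have hmem : ∀ x, R₁ x ∈ Z := by
    intro x
    obtain ⟨z, hz, hze⟩ := hTmem x
    have : S (R₁ x) = S z := by rw [hSR]; exact hze.symm
    rwa [expand_injective (fun x => (hS x).1) this]
  have hub : ∀ x, ‖R₁ x‖ ≤ K * ‖x‖ := by
    intro x
    calc ‖R₁ x‖ ≤ ‖S (R₁ x)‖ := (hS _).1
      _ = ‖T x‖ := by rw [hSR]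
      _ ≤ K * ‖x‖ := (hTb x).2
  rcases subsingleton_or_nontrivial X with hsub | hnt
  · refine ⟨0, fun x => Z.zero_mem, fun x => ?_⟩
    have hx : x = 0 := Subsingleton.elim _ _
    simp [hx]
  have hc : 0 < c := by
    obtain ⟨x, hx⟩ := exists_ne (0 : X)
    have h1 : ‖x‖ ≤ c * ‖x‖ := le_trans (hS x).1 (hS x).2
    have h2 : 0 < ‖x‖ := norm_pos_iff.mpr hx
    nlinarith
  set R : X →L[ℝ] X := R₁.mkContinuous K hub with hRdef
  have hRapp : ∀ x, R x = R₁ x := fun x => rfl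
  refine ⟨c • R, fun x => by rw [ContinuousLinearMap.smul_apply, hRapp]; exact Z.smul_mem _ (hmem x),
    fun x => ?_⟩
  have hnorm : ‖(c • R) x‖ = c * ‖R₁ x‖ := by
    rw [ContinuousLinearMap.smul_apply, hRapp, norm_smul, Real.norm_eq_abs, abs_of_pos hc]
  constructor
  · rw [hnorm]
    calc ‖x‖ ≤ ‖T x‖ := (hTb x).1
      _ = ‖S (R₁ x)‖ := by rw [hSR]
      _ ≤ c * ‖R₁ x‖ := (hS _).2
  · rw [hnorm, mul_assoc]
    exact mul_le_mul_of_nonneg_left (hub x) hc.le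

/-- Two nonzero functionals with nested kernels have equal kernels. -/
lemma ker_antisymm (g g₀ : X →L[ℝ] ℝ) (hg : g ≠ 0) (hg₀ : g₀ ≠ 0)
    (h : ∀ x, g x = 0 → g₀ x = 0) : ∀ x, g₀ x = 0 → g x = 0 := by
  obtain ⟨x₁, hx₁⟩ : ∃ x₁, g x₁ ≠ 0 := by
    by_contra hcon
    push_neg at hcon
    exact hg (by ext x; simpa using hcon x)
  have key : ∀ w, g₀ w = (g w / g x₁) * g₀ x₁ := by
    intro w
    have h0 : g (w - (g w / g x₁) • x₁) = 0 := by
      simp [map_sub, map_smul, smul_eq_mul, div_mul_cancel₀ _ hx₁]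
    have := h _ h0
    simpa [map_sub, map_smul, smul_eq_mul, sub_eq_zero] using this
  have hx₁' : g₀ x₁ ≠ 0 := by
    intro h0
    apply hg₀
    ext w
    simp [key w, h0]
  intro x hx
  have := key x
  rw [hx] at this
  have := (mul_eq_zero.mp this.symm).resolve_right hx₁'
  exact (div_eq_zero_iff.mp this).resolve_right hx₁

set_option maxHeartbeats 1000000 in
/-- The key hyperplane lemma: if `X` embeds into one closed hyperplane with constant `c₁`,
then it embeds into every closed hyperplane with the uniform constant `14 * (3 * c₁ + 1)`. -/
lemma goodK_ker (T₀ : X →L[ℝ] X) (g₀ : X →L[ℝ] ℝ) (c₁ : ℝ) (hc₁ : 1 ≤ c₁)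
    (hmem₀ : ∀ x, g₀ (T₀ x) = 0) (hb₀ : ∀ x, ‖x‖ ≤ ‖T₀ x‖ ∧ ‖T₀ x‖ ≤ c₁ * ‖x‖)
    (hg₀ : g₀ ≠ 0) (g : X →L[ℝ] ℝ) :
    GoodK (14 * (3 * c₁ + 1)) (LinearMap.ker (g : X →ₗ[ℝ] ℝ)) := by
  have hA : c₁ ≤ 14 * (3 * c₁ + 1) := by nlinarith
  set φ : X →L[ℝ] ℝ := g.comp T₀ with hφdef
  have hφapp : ∀ x, φ x = g (T₀ x) := fun x => rfl
  by_cases hφ : φ = 0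
  · refine (GoodK.monoK ⟨T₀, fun x => ?_, hb₀⟩ hA)
    rw [LinearMap.mem_ker, ContinuousLinearMap.coe_coe, ← hφapp, hφ]
    rfl
  have hg : g ≠ 0 := by
    intro h0
    apply hφ
    ext x
    rw [hφapp, h0]
    rfl
  set M : Submodule ℝ X := (LinearMap.ker (φ : X →ₗ[ℝ] ℝ)).map (T₀ : X →ₗ[ℝ] X) with hMdef
  have hMker : M ≤ LinearMap.ker (g : X →ₗ[ℝ] ℝ) := by
    rintro y ⟨k, hk, rfl⟩
    have hk' : φ k = 0 := by simpa using hk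
    simpa [LinearMap.mem_ker, hφapp] using hk'
  by_cases hM : ∀ y ∈ LinearMap.ker (g : X →ₗ[ℝ] ℝ), y ∈ M
  · -- Case B : M = ker g, hence ker g ≤ ker g₀ and they coincide; T₀ works.
    have hleq : ∀ x, g x = 0 → g₀ x = 0 := by
      intro x hx
      obtain ⟨k, _, rfl⟩ := hM x (LinearMap.mem_ker.mpr hx)
      exact hmem₀ k
    have hrev := ker_antisymm g g₀ hg hg₀ hleq
    refine (GoodK.monoK ⟨T₀, fun x => ?_, hb₀⟩ hA)
    exact LinearMap.mem_ker.mpr (hrev _ (hmem₀ x))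
  -- Case A
  push_neg at hM
  obtain ⟨v, hvker, hvM⟩ := hM
  have hMclosed : IsClosed (M : Set X) :=
    isClosed_map_of_expand (fun x => (hb₀ x).1) (ContinuousLinearMap.isClosed_ker φ)
  -- Riesz lemma inside the hyperplane `ker g`.
  obtain ⟨w, hwker, hwnorm, hwdist⟩ :
      ∃ w : X, g w = 0 ∧ ‖w‖ = 1 ∧ ∀ y ∈ M, (1:ℝ)/2 ≤ ‖w - y‖ := by
    set E := ↥(LinearMap.ker (g : X →ₗ[ℝ] ℝ))
    set F : Submodule ℝ E := M.comap (LinearMap.ker (g : X →ₗ[ℝ] ℝ)).subtype with hFdef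
    have hFc : IsClosed (F : Set E) := hMclosed.preimage continuous_subtype_val
    have hFne : ∃ x : E, x ∉ F := ⟨⟨v, LinearMap.mem_ker.mpr hvker⟩, by
      simp only [hFdef, Submodule.mem_comap, Submodule.coe_subtype]
      exact hvM⟩
    obtain ⟨x₀, hx₀F, hx₀⟩ := riesz_lemma (𝕜 := ℝ) hFc hFne (r := 1/2) (by norm_num)
    have hx₀ne : x₀ ≠ 0 := fun h => hx₀F (h ▸ F.zero_mem)
    have hx₀pos : 0 < ‖x₀‖ := norm_pos_iff.mpr hx₀ne
    refine ⟨‖(x₀ : X)‖⁻¹ • (x₀ : X), by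
        simp [map_smul, (LinearMap.mem_ker.mp x₀.2)], by
        have : ‖(x₀ : X)‖ = ‖x₀‖ := rfl
        rw [norm_smul, this, norm_inv, norm_norm, inv_mul_cancel₀ (ne_of_gt hx₀pos)], ?_⟩
    intro y hy
    have hyF : (⟨y, hMker hy⟩ : E) ∈ F := by
      simp only [hFdef, Submodule.mem_comap, Submodule.coe_subtype]
      exact hy
    have hx₀n : ‖(x₀ : X)‖ = ‖x₀‖ := rfl
    have h1 : (1:ℝ)/2 * ‖x₀‖ ≤ ‖x₀ - (‖x₀‖ • ⟨y, hMker hy⟩ : E)‖ :=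
      hx₀ _ (F.smul_mem _ hyF)
    have h2 : ‖x₀ - (‖x₀‖ • ⟨y, hMker hy⟩ : E)‖ = ‖(x₀ : X) - ‖x₀‖ • y‖ := rfl
    rw [h2] at h1
    have h3 : ‖(x₀:X)‖⁻¹ • (x₀:X) - y = ‖x₀‖⁻¹ • ((x₀ : X) - ‖x₀‖ • y) := by
      rw [smul_sub, smul_smul, hx₀n, inv_mul_cancel₀ (ne_of_gt hx₀pos), one_smul]
    rw [h3, norm_smul, norm_inv, Real.norm_eq_abs, abs_of_pos hx₀pos,
      le_inv_mul_iff₀ hx₀pos]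
    calc ‖x₀‖ * (1/2) = 1/2 * ‖x₀‖ := mul_comm _ _
      _ ≤ _ := h1
  -- the key transversality estimate
  have hkey : ∀ k ∈ LinearMap.ker (φ : X →ₗ[ℝ] ℝ), ∀ t : ℝ, |t| / 2 ≤ ‖T₀ k + t • w‖ := by
    intro k hk t
    rcases eq_or_ne t 0 with rfl | ht
    · simpa using norm_nonneg (T₀ k + (0:ℝ) • w)
    · have hmem : -t⁻¹ • T₀ k ∈ M := M.smul_mem _ ⟨k, hk, rfl⟩
      have h1 : (1:ℝ)/2 ≤ ‖w - -t⁻¹ • T₀ k‖ := hwdist _ hmem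
      have h2 : T₀ k + t • w = t • (w - -t⁻¹ • T₀ k) := by
        rw [smul_sub, smul_smul, mul_neg, mul_inv_cancel₀ ht, neg_smul, one_smul,
          sub_neg_eq_add, add_comm]
      rw [h2, norm_smul, Real.norm_eq_abs]
      calc |t| / 2 = |t| * (1/2) := by ring
        _ ≤ |t| * ‖w - -t⁻¹ • T₀ k‖ := mul_le_mul_of_nonneg_left h1 (abs_nonneg t)
  have hγ : 0 < ‖φ‖ := by
    have hne : ‖φ‖ ≠ 0 := fun h => hφ ((ContinuousLinearMap.opNorm_zero_iff φ).mp h)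
    exact lt_of_le_of_ne (norm_nonneg φ) (Ne.symm hne)
  obtain ⟨u, hu1, hu2⟩ : ∃ u : X, φ u = 1 ∧ ‖u‖ ≤ 2 / ‖φ‖ := by
    have hnot : ¬ (∀ x, ‖φ x‖ ≤ (‖φ‖/2) * ‖x‖) := by
      intro hall
      have := φ.opNorm_le_bound (by positivity) hall
      linarith
    push_neg at hnot
    obtain ⟨x, hx⟩ := hnot
    have hxpos : 0 < ‖φ x‖ := lt_of_le_of_lt (by positivity) hx
    have hφx : φ x ≠ 0 := by
      intro h0; rw [h0] at hxpos; simp at hxpos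
    refine ⟨(φ x)⁻¹ • x, by simp [map_smul, smul_eq_mul, inv_mul_cancel₀ hφx], ?_⟩
    rw [norm_smul, norm_inv, inv_mul_le_iff₀ hxpos]
    rw [Real.norm_eq_abs] at hx hxpos ⊢
    rw [mul_comm, div_mul_eq_mul_div, le_div_iff₀ hγ]
    nlinarith [abs_nonneg (φ x), norm_nonneg x]
  set E₁ : X →L[ℝ] X := T₀ - φ.smulRight (T₀ u) + φ.smulRight (‖φ‖⁻¹ • w) with hE₁
  have hE₁app : ∀ x, E₁ x = T₀ (x - φ x • u) + (φ x * ‖φ‖⁻¹) • w := by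
    intro x
    simp only [hE₁, ContinuousLinearMap.add_apply, ContinuousLinearMap.sub_apply,
      ContinuousLinearMap.smulRight_apply, map_sub, map_smul, smul_smul]
  have hkerφ : ∀ x, φ (x - φ x • u) = 0 := by
    intro x
    simp [map_sub, map_smul, smul_eq_mul, hu1]
  have hmemE : ∀ x, E₁ x ∈ LinearMap.ker (g : X →ₗ[ℝ] ℝ) := by
    intro x
    rw [LinearMap.mem_ker, ContinuousLinearMap.coe_coe, hE₁app, map_add, map_smul]
    have h1 : g (T₀ (x - φ x • u)) = φ (x - φ x • u) := (hφapp _).symm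
    rw [h1, hkerφ, hwker]
    simp
  have hbounds : ∀ x, ‖x‖ ≤ 14 * ‖E₁ x‖ ∧ ‖E₁ x‖ ≤ (3 * c₁ + 1) * ‖x‖ := by
    intro x
    set k := x - φ x • u with hkdef
    set t := φ x * ‖φ‖⁻¹ with htdef
    have habsphi : |φ x| ≤ ‖φ‖ * ‖x‖ := by
      have := φ.le_opNorm x
      rwa [Real.norm_eq_abs] at this
    have habst : |t| = |φ x| * ‖φ‖⁻¹ := by
      rw [htdef, abs_mul, abs_inv, abs_of_pos hγ]
    have ht_le : |t| ≤ ‖x‖ := by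
      rw [habst]
      calc |φ x| * ‖φ‖⁻¹ ≤ (‖φ‖ * ‖x‖) * ‖φ‖⁻¹ :=
            mul_le_mul_of_nonneg_right habsphi (by positivity)
        _ = ‖x‖ := by field_simp
    have hphiu : |φ x| * ‖u‖ ≤ 2 * |t| := by
      calc |φ x| * ‖u‖ ≤ |φ x| * (2/‖φ‖) := mul_le_mul_of_nonneg_left hu2 (abs_nonneg _)
        _ = 2 * (|φ x| * ‖φ‖⁻¹) := by ring
        _ = 2 * |t| := by rw [habst]
    have hk3 : ‖k‖ ≤ 3 * ‖x‖ := by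
      calc ‖k‖ ≤ ‖x‖ + ‖φ x • u‖ := norm_sub_le _ _
        _ = ‖x‖ + |φ x| * ‖u‖ := by rw [norm_smul, Real.norm_eq_abs]
        _ ≤ ‖x‖ + 2 * |t| := by linarith
        _ ≤ ‖x‖ + 2 * ‖x‖ := by linarith
        _ = 3 * ‖x‖ := by ring
    have hxk : ‖x‖ ≤ ‖k‖ + 2 * |t| := by
      have : x = k + φ x • u := by rw [hkdef]; abel
      calc ‖x‖ = ‖k + φ x • u‖ := by rw [← this]
        _ ≤ ‖k‖ + ‖φ x • u‖ := norm_add_le _ _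
        _ = ‖k‖ + |φ x| * ‖u‖ := by rw [norm_smul, Real.norm_eq_abs]
        _ ≤ ‖k‖ + 2 * |t| := by linarith
    have hEx : E₁ x = T₀ k + t • w := by rw [hE₁app]
    have hlow1 : |t| / 2 ≤ ‖E₁ x‖ := by
      rw [hEx]; exact hkey k (LinearMap.mem_ker.mpr (hkerφ x)) t
    have hlow2 : ‖k‖ - |t| ≤ ‖E₁ x‖ := by
      have h1 : ‖T₀ k‖ ≤ ‖E₁ x‖ + |t| := by
        calc ‖T₀ k‖ = ‖(T₀ k + t • w) - t • w‖ := by rw [add_sub_cancel_right]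
          _ ≤ ‖T₀ k + t • w‖ + ‖t • w‖ := norm_sub_le _ _
          _ = ‖E₁ x‖ + |t| := by
              rw [← hEx, norm_smul, Real.norm_eq_abs, hwnorm, mul_one]
      have h2 : ‖k‖ ≤ ‖T₀ k‖ := (hb₀ k).1
      linarith
    constructor
    · linarith [norm_nonneg (E₁ x)]
    · calc ‖E₁ x‖ = ‖T₀ k + t • w‖ := by rw [hEx]
        _ ≤ ‖T₀ k‖ + ‖t • w‖ := norm_add_le _ _
        _ = ‖T₀ k‖ + |t| := by rw [norm_smul, Real.norm_eq_abs, hwnorm, mul_one]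
        _ ≤ c₁ * ‖k‖ + |t| := by linarith [(hb₀ k).2]
        _ ≤ c₁ * (3 * ‖x‖) + ‖x‖ := by
            have h3 : c₁ * ‖k‖ ≤ c₁ * (3 * ‖x‖) :=
              mul_le_mul_of_nonneg_left hk3 (by linarith)
            linarith
        _ = (3 * c₁ + 1) * ‖x‖ := by ring
  refine ⟨(14:ℝ) • E₁, fun x => ?_, fun x => ?_⟩
  · rw [ContinuousLinearMap.smul_apply]
    exact Submodule.smul_mem _ _ (hmemE x)
  · have hnorm : ‖((14:ℝ) • E₁) x‖ = 14 * ‖E₁ x‖ := by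
      rw [ContinuousLinearMap.smul_apply, norm_smul, Real.norm_eq_abs, abs_of_pos]
      norm_num
    constructor
    · rw [hnorm]; exact (hbounds x).1
    · rw [hnorm]
      calc 14 * ‖E₁ x‖ ≤ 14 * ((3 * c₁ + 1) * ‖x‖) :=
            mul_le_mul_of_nonneg_left (hbounds x).2 (by norm_num)
        _ = 14 * (3 * c₁ + 1) * ‖x‖ := by ring

/-- A continuous functional vanishing on a closed subspace and equal to `1` at `v ∉ P`. -/
lemma exists_functional_vanishing {P : Submodule ℝ X} (hP : IsClosed (P : Set X)) {v : X}
    (hv : v ∉ P) : ∃ f : X →L[ℝ] ℝ, f v = 1 ∧ ∀ p ∈ P, f p = 0 := by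
  obtain ⟨f, u, hfv, hfP⟩ :=
    geometric_hahn_banach_point_closed P.convex hP hv
  have hP0 : ∀ p ∈ P, f p = 0 := by
    intro p hp
    by_contra hne
    have hmem : ((u - 1) / f p) • p ∈ P := P.smul_mem _ hp
    have := hfP _ hmem
    rw [map_smul, smul_eq_mul, div_mul_cancel₀ _ hne] at this
    linarith
  have hu0 : u < 0 := by
    have := hfP 0 P.zero_mem
    rwa [map_zero] at this
  have hfvne : f v ≠ 0 := by
    intro h0
    rw [h0] at hfv
    linarith
  refine ⟨(f v)⁻¹ • f, ?_, fun p hp => ?_⟩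
  · rw [ContinuousLinearMap.smul_apply, smul_eq_mul, inv_mul_cancel₀ hfvne]
  · rw [ContinuousLinearMap.smul_apply, hP0 p hp, smul_eq_mul, mul_zero]

/-- key distance estimate to a subspace. -/
lemma dist_smul_bound {P : Submodule ℝ X} {v : X} :
    ∀ p ∈ P, ∀ t : ℝ, Metric.infDist v (P : Set X) * |t| ≤ ‖p + t • v‖ := by
  intro p hp t
  rcases eq_or_ne t 0 with rfl | ht
  · simp
  · have h1 : Metric.infDist v (P : Set X) ≤ ‖v - (-t⁻¹ • p)‖ := by
      rw [← dist_eq_norm]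
      exact Metric.infDist_le_dist_of_mem (P.smul_mem _ hp)
    have h2 : p + t • v = t • (v - -t⁻¹ • p) := by
      rw [smul_sub, smul_smul, mul_neg, mul_inv_cancel₀ ht, neg_smul, one_smul,
        sub_neg_eq_add, add_comm]
    rw [h2, norm_smul, Real.norm_eq_abs, mul_comm]
    exact mul_le_mul_of_nonneg_left h1 (abs_nonneg t)

lemma isClosed_sup_span_singleton {P : Submodule ℝ X} (hP : IsClosed (P : Set X)) (v : X) :
    IsClosed ((P ⊔ Submodule.span ℝ {v} : Submodule ℝ X) : Set X) := by
  by_cases hv : v ∈ P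
  · have : Submodule.span ℝ {v} ≤ P := by rwa [Submodule.span_singleton_le_iff_mem]
    rwa [sup_eq_left.mpr this]
  · haveI : CompleteSpace P := hP.completeSpace_coe
    set δ := Metric.infDist v (P : Set X) with hδdef
    have hδpos : 0 < δ := by
      rcases lt_or_eq_of_le (Metric.infDist_nonneg (x := v) (s := (P : Set X))) with h | h
      · exact h
      · exfalso
        apply hv
        have hne : (P : Set X).Nonempty := ⟨0, P.zero_mem⟩
        exact (hP.mem_iff_infDist_zero hne).mpr h.symm
    set f : (↥P × ℝ) →L[ℝ] X :=
      P.subtypeL.coprod (ContinuousLinearMap.toSpanSingleton ℝ v) with hfdef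
    have hfapp : ∀ q : ↥P × ℝ, f q = (q.1 : X) + q.2 • v := by
      intro q
      simp [hfdef, ContinuousLinearMap.coprod_apply, ContinuousLinearMap.toSpanSingleton_apply]
    set C : ℝ := δ⁻¹ + 1 + δ⁻¹ * ‖v‖ with hCdef
    have hCpos : 0 < C := by positivity
    have hbound : ∀ q : ↥P × ℝ, ‖q‖ ≤ C * ‖f q‖ := by
      intro ⟨p, t⟩
      have hkey : δ * |t| ≤ ‖(p : X) + t • v‖ := dist_smul_bound (p : X) p.2 t
      have ht : |t| ≤ δ⁻¹ * ‖(p : X) + t • v‖ := by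
        rw [le_inv_mul_iff₀ hδpos]
        exact hkey
      have hp : ‖(p : X)‖ ≤ (1 + δ⁻¹ * ‖v‖) * ‖(p : X) + t • v‖ := by
        have h1 : ‖(p : X)‖ ≤ ‖(p : X) + t • v‖ + |t| * ‖v‖ := by
          calc ‖(p : X)‖ = ‖((p : X) + t • v) - t • v‖ := by rw [add_sub_cancel_right]
            _ ≤ ‖(p : X) + t • v‖ + ‖t • v‖ := norm_sub_le _ _
            _ = ‖(p : X) + t • v‖ + |t| * ‖v‖ := by rw [norm_smul, Real.norm_eq_abs]
        have h2 : |t| * ‖v‖ ≤ δ⁻¹ * ‖(p : X) + t • v‖ * ‖v‖ :=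
          mul_le_mul_of_nonneg_right ht (norm_nonneg v)
        calc ‖(p : X)‖ ≤ ‖(p : X) + t • v‖ + δ⁻¹ * ‖(p : X) + t • v‖ * ‖v‖ := by linarith
          _ = (1 + δ⁻¹ * ‖v‖) * ‖(p : X) + t • v‖ := by ring
      rw [Prod.norm_def, hfapp]
      dsimp only
      simp only [Real.norm_eq_abs]
      have hnn : 0 ≤ ‖(p : X) + t • v‖ := norm_nonneg _
      have hC1 : (1 + δ⁻¹ * ‖v‖) * ‖(p : X) + t • v‖ ≤ C * ‖(p : X) + t • v‖ := by
        apply mul_le_mul_of_nonneg_right _ hnn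
        rw [hCdef]
        have : 0 ≤ δ⁻¹ := by positivity
        linarith
      have hC2 : δ⁻¹ * ‖(p : X) + t • v‖ ≤ C * ‖(p : X) + t • v‖ := by
        apply mul_le_mul_of_nonneg_right _ hnn
        rw [hCdef]
        have h3 : (0:ℝ) ≤ δ⁻¹ * ‖v‖ := by positivity
        linarith
      exact max_le (le_trans hp hC1) (le_trans ht hC2)
    have hanti : AntilipschitzWith (Real.toNNReal C) f := by
      apply AddMonoidHomClass.antilipschitz_of_bound
      intro q
      rw [Real.coe_toNNReal C hCpos.le]
      exact hbound q
    have hrange : Set.range f = ((P ⊔ Submodule.span ℝ {v} : Submodule ℝ X) : Set X) := by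
      ext y
      simp only [Set.mem_range, SetLike.mem_coe]
      constructor
      · rintro ⟨⟨p, t⟩, rfl⟩
        rw [hfapp]
        exact Submodule.add_mem_sup p.2 (Submodule.mem_span_singleton.mpr ⟨t, rfl⟩)
      · intro hy
        obtain ⟨a, ha, b, hb, rfl⟩ := Submodule.mem_sup.mp hy
        obtain ⟨t, rfl⟩ := Submodule.mem_span_singleton.mp hb
        exact ⟨(⟨a, ha⟩, t), by rw [hfapp]⟩
    rw [← hrange]
    exact hanti.isClosed_range f.uniformContinuous

/-- Peeling one spanning vector off the target subspace. -/
lemma goodK_peel {A : ℝ} (hA1 : 1 ≤ A)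
    (hAker : ∀ g : X →L[ℝ] ℝ, GoodK A (LinearMap.ker (g : X →ₗ[ℝ] ℝ)))
    {P : Submodule ℝ X} (hP : IsClosed (P : Set X)) (v : X) {K : ℝ} (hK0 : 0 ≤ K)
    (h : GoodK K (P ⊔ Submodule.span ℝ {v})) :
    GoodK (K * A) P := by
  by_cases hv : v ∈ P
  · have heq : Submodule.span ℝ {v} ≤ P := by rwa [Submodule.span_singleton_le_iff_mem]
    rw [sup_eq_left.mpr heq] at h
    exact h.monoK (le_mul_of_one_le_right hK0 hA1)
  · obtain ⟨f, hfv, hfP⟩ := exists_functional_vanishing hP hv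
    obtain ⟨T, hTmem, hTb⟩ := h
    obtain ⟨E, hEmem, hEb⟩ := hAker (f.comp T)
    refine ⟨T.comp E, fun x => ?_, fun x => ?_⟩
    · have hker : f (T (E x)) = 0 := hEmem x
      obtain ⟨a, ha, b, hb, hab⟩ := Submodule.mem_sup.mp (hTmem (E x))
      obtain ⟨t, rfl⟩ := Submodule.mem_span_singleton.mp hb
      have : f (T (E x)) = t := by
        rw [← hab, map_add, hfP a ha, map_smul, hfv, smul_eq_mul, mul_one, zero_add]
      rw [this] at hker
      subst hker
      rw [ContinuousLinearMap.comp_apply, ← hab]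
      simpa using ha
    · rw [ContinuousLinearMap.comp_apply]
      constructor
      · exact le_trans (hEb x).1 (hTb (E x)).1
      · calc ‖T (E x)‖ ≤ K * ‖E x‖ := (hTb _).2
          _ ≤ K * (A * ‖x‖) := mul_le_mul_of_nonneg_left (hEb x).2 hK0
          _ = K * A * ‖x‖ := by ring

/-- Peeling a finite set of spanning vectors: combined closedness and embedding statement. -/
lemma goodK_peel_finset {A : ℝ} (hA1 : 1 ≤ A)
    (hAker : ∀ g : X →L[ℝ] ℝ, GoodK A (LinearMap.ker (g : X →ₗ[ℝ] ℝ))) (s : Finset X) :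
    ∀ P : Submodule ℝ X, IsClosed (P : Set X) →
      IsClosed ((P ⊔ Submodule.span ℝ (s : Set X) : Submodule ℝ X) : Set X) ∧
      (∀ K : ℝ, 0 ≤ K → GoodK K (P ⊔ Submodule.span ℝ (s : Set X)) →
        GoodK (K * A ^ s.card) P) := by
  classical
  induction s using Finset.induction with
  | empty =>
      intro P hP
      have hspan : Submodule.span ℝ ((∅ : Finset X) : Set X) = ⊥ := by
        simp [Submodule.span_empty]
      rw [hspan]
      constructor
      · simpa using hP
      · intro K hK0 h
        rw [sup_bot_eq] at h
        simpa using h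
  | @insert a s hn ih =>
      intro P hP
      have hrw : (P ⊔ Submodule.span ℝ ((insert a s : Finset X) : Set X) : Submodule ℝ X)
          = (P ⊔ Submodule.span ℝ (s : Set X)) ⊔ Submodule.span ℝ {a} := by
        rw [Finset.coe_insert, Submodule.span_insert,
          sup_comm (Submodule.span ℝ {a}) (Submodule.span ℝ (s : Set X)), ← sup_assoc]
      constructor
      · rw [hrw]
        exact isClosed_sup_span_singleton (ih P hP).1 a
      · intro K hK0 h
        rw [hrw] at h
        have h1 : GoodK (K * A) (P ⊔ Submodule.span ℝ (s : Set X)) :=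
          goodK_peel hA1 hAker (ih P hP).1 a hK0 h
        have h2 := (ih P hP).2 (K * A) (by positivity) h1
        rw [Finset.card_insert_of_notMem hn]
        refine h2.monoK (le_of_eq ?_)
        ring

/-- Inside every nice (closed, infinite-dimensional) subspace there is a nice subspace that is
`K`-bad, provided bad subspaces exist globally. -/
lemma step_bad
    (hgood : ∀ Z : Submodule ℝ X, IsClosed (Z : Set X) → ¬ FiniteDimensional ℝ Z →
      ∃ C : ℝ, 1 ≤ C ∧ GoodK C Z)
    (hbad : ∀ K : ℝ, ∃ Z : Submodule ℝ X, IsClosed (Z : Set X) ∧ ¬ FiniteDimensional ℝ Z ∧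
      ¬ GoodK K Z)
    (W : Submodule ℝ X) (hWc : IsClosed (W : Set X)) (hWi : ¬ FiniteDimensional ℝ W) (K : ℝ) :
    ∃ W' : Submodule ℝ X, IsClosed (W' : Set X) ∧ ¬ FiniteDimensional ℝ W' ∧ W' ≤ W ∧
      ¬ GoodK K W' := by
  obtain ⟨C, hC1, S, hSmem, hSb⟩ := hgood W hWc hWi
  obtain ⟨Z, hZc, hZi, hZbad⟩ := hbad (C * max K 0)
  have hSlow : ∀ x, ‖x‖ ≤ ‖S x‖ := fun x => (hSb x).1
  refine ⟨Z.map (S : X →ₗ[ℝ] X), isClosed_map_of_expand hSlow hZc,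
    infdim_map_of_expand hSlow hZi, ?_, ?_⟩
  · rintro y ⟨z, _, rfl⟩
    exact hSmem z
  · intro hG
    exact hZbad (GoodK.pull hSb (le_max_right K 0) (hG.monoK (le_max_left K 0)))

/-- The recursive construction of the decreasing chain of bad subspaces together with the
linearly independent vectors picked along the way. -/
lemma chain_exists
    (hgood : ∀ Z : Submodule ℝ X, IsClosed (Z : Set X) → ¬ FiniteDimensional ℝ Z →
      ∃ C : ℝ, 1 ≤ C ∧ GoodK C Z)
    (hbad : ∀ K : ℝ, ∃ Z : Submodule ℝ X, IsClosed (Z : Set X) ∧ ¬ FiniteDimensional ℝ Z ∧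
      ¬ GoodK K Z)
    (hX : ¬ FiniteDimensional ℝ X) (a : ℕ → ℝ) :
    ∃ (W : ℕ → Submodule ℝ X) (s : ℕ → Finset X),
      (∀ n, IsClosed (W n : Set X)) ∧ (∀ n, ¬ FiniteDimensional ℝ (W n)) ∧
      s 0 = ∅ ∧
      (∀ n, W (n+1) ≤ W n) ∧ (∀ n, ¬ GoodK (a (n+1)) (W (n+1))) ∧
      (∀ n, ∃ x, x ∈ W n ∧ x ∉ Submodule.span ℝ ((s n : Set X)) ∧ s (n+1) = insert x (s n)) := by
  classical
  set St := {p : Submodule ℝ X × Finset X //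
    IsClosed (p.1 : Set X) ∧ ¬ FiniteDimensional ℝ p.1} with hSt
  have hstep : ∀ (p : St) (K : ℝ), ∃ q : St, q.1.1 ≤ p.1.1 ∧ ¬ GoodK K q.1.1 ∧
      ∃ x, x ∈ p.1.1 ∧ x ∉ Submodule.span ℝ ((p.1.2 : Set X)) ∧ q.1.2 = insert x p.1.2 := by
    rintro ⟨⟨W, s⟩, hWc, hWi⟩ K
    obtain ⟨W', hW'c, hW'i, hW'le, hW'bad⟩ := step_bad hgood hbad W hWc hWi K
    obtain ⟨x, hxW, hxs⟩ : ∃ x, x ∈ W ∧ x ∉ Submodule.span ℝ ((s : Set X)) := by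
      by_contra hcon
      push_neg at hcon
      exact hWi (Submodule.finiteDimensional_of_le (fun y hy => hcon y hy))
    exact ⟨⟨(W', insert x s), hW'c, hW'i⟩, hW'le, hW'bad, x, hxW, hxs, rfl⟩
  choose F hle hFbad xF hxW hxs hins using hstep
  have htop : IsClosed ((⊤ : Submodule ℝ X) : Set X) ∧
      ¬ FiniteDimensional ℝ (⊤ : Submodule ℝ X) := by
    constructor
    · rw [Submodule.top_coe]; exact isClosed_univ
    · intro h
      exact hX (Module.Finite.equiv (Submodule.topEquiv (R := ℝ) (M := X)))
  set f : ℕ → St := fun n => Nat.rec ⟨(⊤, ∅), htop⟩ (fun n p => F p (a (n+1))) n with hf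
  have hfs : ∀ n, f (n+1) = F (f n) (a (n+1)) := fun n => rfl
  refine ⟨fun n => (f n).1.1, fun n => (f n).1.2, fun n => (f n).2.1, fun n => (f n).2.2,
    rfl, ?_, ?_, ?_⟩
  · intro n
    have h := hle (f n) (a (n+1))
    rw [← hfs n] at h
    exact h
  · intro n
    have h := hFbad (f n) (a (n+1))
    rw [← hfs n] at h
    exact h
  · intro n
    refine ⟨xF (f n) (a (n+1)), hxW _ _, hxs _ _, ?_⟩
    have h := hins (f n) (a (n+1))
    rw [← hfs n] at h
    exact h

set_option maxHeartbeats 1000000 in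
/-- The main contradiction: if `X` is infinite-dimensional, every nice subspace is good for
some constant, but there is no uniform constant, we derive `False`. -/
lemma main_contradiction
    (hgood : ∀ Z : Submodule ℝ X, IsClosed (Z : Set X) → ¬ FiniteDimensional ℝ Z →
      ∃ C : ℝ, 1 ≤ C ∧ GoodK C Z)
    (hbad : ∀ K : ℝ, ∃ Z : Submodule ℝ X, IsClosed (Z : Set X) ∧ ¬ FiniteDimensional ℝ Z ∧
      ¬ GoodK K Z)
    (hX : ¬ FiniteDimensional ℝ X) : False := by
  classical
  haveI : Nontrivial X := by
    by_contra h
    rw [not_nontrivial_iff_subsingleton] at h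
    exact hX (Module.Finite.of_basis (Module.Basis.empty (ι := Fin 0) X))
  obtain ⟨x₀, hx₀⟩ := exists_ne (0 : X)
  obtain ⟨g₀, hg₀norm, hg₀x⟩ := exists_dual_vector ℝ x₀ (norm_ne_zero_iff.mpr hx₀)
  have hg₀ne : g₀ ≠ 0 := by
    intro h0
    rw [h0] at hg₀x
    simp only [ContinuousLinearMap.zero_apply] at hg₀x
    exact hx₀ (norm_eq_zero.mp hg₀x.symm)
  have hker_closed : IsClosed ((LinearMap.ker (g₀ : X →ₗ[ℝ] ℝ) : Submodule ℝ X) : Set X) :=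
    ContinuousLinearMap.isClosed_ker g₀
  have hker_inf : ¬ FiniteDimensional ℝ (LinearMap.ker (g₀ : X →ₗ[ℝ] ℝ)) := by
    intro hfin
    apply hX
    have hx₀n : g₀ x₀ ≠ 0 := by rw [hg₀x]; exact norm_ne_zero_iff.mpr hx₀
    have hsup : (LinearMap.ker (g₀ : X →ₗ[ℝ] ℝ) ⊔ Submodule.span ℝ {x₀} : Submodule ℝ X) = ⊤ := by
      rw [eq_top_iff]
      intro y _
      have hmem : y - (g₀ y / g₀ x₀) • x₀ ∈ LinearMap.ker (g₀ : X →ₗ[ℝ] ℝ) := by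
        rw [LinearMap.mem_ker, ContinuousLinearMap.coe_coe, map_sub, map_smul, smul_eq_mul, div_mul_cancel₀ _ hx₀n, sub_self]
      have hy : y = (y - (g₀ y / g₀ x₀) • x₀) + (g₀ y / g₀ x₀) • x₀ := by abel
      rw [hy]
      exact Submodule.add_mem_sup hmem (Submodule.mem_span_singleton.mpr ⟨_, rfl⟩)
    haveI := hfin
    haveI : FiniteDimensional ℝ
        ((LinearMap.ker (g₀ : X →ₗ[ℝ] ℝ) ⊔ Submodule.span ℝ {x₀} : Submodule ℝ X)) :=
      Submodule.finiteDimensional_sup _ _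
    rw [hsup] at this
    exact Module.Finite.equiv (Submodule.topEquiv (R := ℝ) (M := X))
  obtain ⟨c₁, hc₁, T₀, hT₀mem, hT₀b⟩ := hgood _ hker_closed hker_inf
  set A : ℝ := 14 * (3 * c₁ + 1) with hA
  have hA1 : (1:ℝ) ≤ A := by rw [hA]; nlinarith
  have hAker : ∀ g : X →L[ℝ] ℝ, GoodK A (LinearMap.ker (g : X →ₗ[ℝ] ℝ)) :=
    goodK_ker T₀ g₀ c₁ hc₁ (fun x => LinearMap.mem_ker.mp (hT₀mem x)) hT₀b hg₀ne
  set a : ℕ → ℝ := fun n => (n : ℝ) * A ^ n with ha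
  obtain ⟨W, s, hWc, hWi, hs0, hWmono, hWbad, hstepx⟩ := chain_exists hgood hbad hX a
  choose x hxW hxspan hsins using hstepx
  have hsmono : ∀ m n, m ≤ n → s m ⊆ s n := by
    intro m n hmn
    induction n with
    | zero =>
        have : m = 0 := Nat.le_zero.mp hmn
        subst this; exact subset_rfl
    | succ n ih =>
        rcases Nat.lt_or_ge m (n+1) with h | h
        · have h1 := ih (Nat.lt_succ_iff.mp h)
          refine h1.trans ?_
          rw [hsins n]
          exact Finset.subset_insert _ _
        · have : m = n + 1 := le_antisymm hmn h
          subst this; exact subset_rfl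
  have hWanti : ∀ m n, m ≤ n → W n ≤ W m := by
    intro m n hmn
    induction n with
    | zero =>
        have : m = 0 := Nat.le_zero.mp hmn
        subst this; exact le_rfl
    | succ n ih =>
        rcases Nat.lt_or_ge m (n+1) with h | h
        · exact le_trans (hWmono n) (ih (Nat.lt_succ_iff.mp h))
        · have : m = n + 1 := le_antisymm hmn h
          subst this; exact le_rfl
  have hcard : ∀ n, (s n).card ≤ n := by
    intro n
    induction n with
    | zero => rw [hs0]; simp
    | succ n ih =>
        rw [hsins n]
        calc (insert (x n) (s n)).card ≤ (s n).card + 1 := Finset.card_insert_le _ _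
          _ ≤ n + 1 := by omega
  have hrank : ∀ n : ℕ, n ≤ Module.finrank ℝ (Submodule.span ℝ ((s n : Set X))) := by
    intro n
    induction n with
    | zero => exact Nat.zero_le _
    | succ n ih =>
        have hlt : Submodule.span ℝ ((s n : Set X)) < Submodule.span ℝ ((s (n+1) : Set X)) := by
          rw [hsins n, Finset.coe_insert]
          refine lt_of_le_of_ne (Submodule.span_mono (Set.subset_insert _ _)) ?_
          intro heq
          apply hxspan n
          rw [heq]
          exact Submodule.subset_span (Set.mem_insert _ _)
        have := Submodule.finrank_lt_finrank_of_lt hlt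
        omega
  set U : Set X := ⋃ n, ((s n : Set X)) with hU
  set V := (Submodule.span ℝ U).topologicalClosure with hV
  have hVc := Submodule.isClosed_topologicalClosure (Submodule.span ℝ U)
  have hVi : ¬ FiniteDimensional ℝ V := by
    intro hfin
    have hle : ∀ n, Submodule.span ℝ ((s n : Set X)) ≤ V := by
      intro n
      refine le_trans (Submodule.span_mono ?_) (Submodule.le_topologicalClosure _)
      exact Set.subset_iUnion (fun n => ((s n : Set X))) n
    have h2 : ∀ n : ℕ, n ≤ Module.finrank ℝ V := by
      intro n
      haveI := hfin
      exact le_trans (hrank n) (Submodule.finrank_mono (hle n))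
    have := h2 (Module.finrank ℝ V + 1)
    omega
  obtain ⟨c, hc1, T, hTmem, hTb⟩ := hgood V hVc hVi
  obtain ⟨N₀, hN₀⟩ := exists_nat_ge c
  set N := N₀ + 1 with hN
  set tail := (Submodule.span ℝ (U \ ((s N : Set X)))).topologicalClosure with htail
  have htailc := Submodule.isClosed_topologicalClosure (Submodule.span ℝ (U \ ((s N : Set X))))
  have htail_le : tail ≤ W N := by
    apply Submodule.topologicalClosure_minimal
    · rw [Submodule.span_le]
      rintro y ⟨hyU, hyN⟩
      obtain ⟨m, hym⟩ : ∃ m, y ∈ s m := by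
        simpa [hU, Set.mem_iUnion] using hyU
      have claim : ∀ m, ∀ y, y ∈ s m → y ∉ s N → y ∈ W N := by
        intro m
        induction m with
        | zero =>
            intro y hy _
            rw [hs0] at hy
            simp at hy
        | succ m ih =>
            intro y hy hyN
            rw [hsins m] at hy
            rcases Finset.mem_insert.mp hy with h | h
            · subst h
              by_cases hmN : N ≤ m
              · exact hWanti N m hmN (hxW m)
              · exfalso
                apply hyN
                have hsub : s (m+1) ⊆ s N := hsmono _ _ (by omega)
                apply hsub
                rw [hsins m]
                exact Finset.mem_insert_self _ _
            · exact ih y h hyN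
      exact claim m y hym (by simpa using hyN)
    · exact hWc N
  have hsupc := (goodK_peel_finset hA1 hAker (s N) tail htailc).1
  have hVle : V ≤ tail ⊔ Submodule.span ℝ ((s N : Set X)) := by
    refine Submodule.topologicalClosure_minimal _ ?_ hsupc
    rw [Submodule.span_le]
    intro y hy
    by_cases hyN : y ∈ ((s N : Set X))
    · exact Submodule.mem_sup_right (Submodule.subset_span hyN)
    · exact Submodule.mem_sup_left
        (Submodule.le_topologicalClosure _ (Submodule.subset_span ⟨hy, hyN⟩))
  have hGoodSup : GoodK c (tail ⊔ Submodule.span ℝ ((s N : Set X))) :=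
    GoodK.mono ⟨T, hTmem, hTb⟩ hVle
  have hGoodTail := (goodK_peel_finset hA1 hAker (s N) tail htailc).2 c (by linarith) hGoodSup
  have hGoodWN : GoodK (c * A ^ (s N).card) (W N) := hGoodTail.mono htail_le
  have hfinal : GoodK (a N) (W N) := by
    apply hGoodWN.monoK
    have h1 : A ^ (s N).card ≤ A ^ N := pow_le_pow_right₀ hA1 (hcard N)
    have h2 : (0:ℝ) < A ^ N := by positivity
    have hcN : c ≤ (N : ℝ) := by
      rw [hN]
      push_cast
      linarith
    calc c * A ^ (s N).card ≤ c * A ^ N := mul_le_mul_of_nonneg_left h1 (by linarith)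
      _ ≤ (N:ℝ) * A ^ N := mul_le_mul_of_nonneg_right hcN h2.le
      _ = a N := rfl
  exact hWbad N₀ hfinal

end Aux

/-- a minimal Banach space is locally minimal. -/
theorem stmt6 {X : Type} [NormedAddCommGroup X] [NormedSpace ℝ X] [CompleteSpace X]
    (hmin : ∀ Z : Submodule ℝ X, IsClosed (Z : Set X) → ¬ FiniteDimensional ℝ Z →
      Embeds X ↥Z) :
    ∃ K : ℝ, 1 ≤ K ∧ ∀ Z : Submodule ℝ X, IsClosed (Z : Set X) →
      ¬ FiniteDimensional ℝ Z →
      ∀ F : Submodule ℝ X, FiniteDimensional ℝ F → EmbedsWithConst K ↥F ↥Z := by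
  classical
  by_cases hX : FiniteDimensional ℝ X
  · refine ⟨1, le_rfl, fun Z hZc hZi => ?_⟩
    haveI := hX
    exact absurd (inferInstance : FiniteDimensional ℝ Z) hZi
  · have hgood : ∀ Z : Submodule ℝ X, IsClosed (Z : Set X) → ¬ FiniteDimensional ℝ Z →
        ∃ C : ℝ, 1 ≤ C ∧ GoodK C Z := fun Z hc hi => exists_goodK_of_embeds (hmin Z hc hi)
    by_contra hcon
    push_neg at hcon
    refine main_contradiction hgood ?_ hX
    intro K
    obtain ⟨Z, hZc, hZi, F, hF, hnot⟩ := hcon (max K 1) (le_max_right _ _)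
    refine ⟨Z, hZc, hZi, fun hG => hnot ?_⟩
    obtain ⟨T, hTmem, hTb⟩ := hG
    refine ⟨(T.comp F.subtypeL).codRestrict Z (fun y => hTmem _), fun y => ?_⟩
    have h1 : ‖((T.comp F.subtypeL).codRestrict Z (fun y => hTmem _)) y‖ = ‖T (y : X)‖ := rfl
    have h2 : ‖y‖ = ‖(y : X)‖ := rfl
    rw [h1, h2]
    constructor
    · exact (hTb (y : X)).1
    · calc ‖T (y : X)‖ ≤ K * ‖(y : X)‖ := (hTb _).2
        _ ≤ max K 1 * ‖(y : X)‖ := mul_le_mul_of_nonneg_right (le_max_left _ _) (norm_nonneg _)
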